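/- Let s : ℝ^n → ℝ^n satisfy s(c x) = c^{α−1} s(x) for all c > 0 and x ∈ ℝ^n, where α > 0, and fix β ∈ ℝ and c > 0. If φ : I → ℝ^n is a twice-differentiable solution of the constant-Euclidean-speed geodesic equation φ̈ − β (s(φ) · φ̇) φ̇ + β s(φ) ‖φ̇‖² = 0, then ψ(t) = c φ(t) solves the same equation with inverse temperature β c^{−α}: ψ̈ − β c^{−α} (s(ψ) · ψ̇) ψ̇ + β c^{−α} s(ψ) ‖ψ̇‖² = 0. -/

import Mathlib

open scoped RealInnerProductSpace

lemma deriv_const_smul_fun {E : Type*} [NormedAddCommGroup E] [NormedSpace ℝ E]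
    (c : ℝ) (hc : c ≠ 0) (f : ℝ → E) :
    deriv (fun u => c • f u) = fun u => c • deriv f u := by
  funext u
  by_cases h : DifferentiableAt ℝ f u
  · exact deriv_const_smul c h
  · rw [deriv_zero_of_not_differentiableAt h,
      deriv_zero_of_not_differentiableAt, smul_zero]
    intro hcontra
    apply h
    have := hcontra.const_smul c⁻¹
    simpa [Pi.smul_def, smul_smul, inv_mul_cancel₀ hc] using this

/-- **Scaling of constant-Euclidean-speed Fermat geodesics under homogeneous scores.**
If `s(c x) = c^{α−1} s(x)` for all `c > 0` (with `α > 0`), and `φ` solves the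
constant-Euclidean-speed geodesic equation `φ̈ − β (s(φ)·φ̇) φ̇ + β s(φ) ‖φ̇‖² = 0`
on an interval `I`, then `ψ = c φ` solves the same equation with inverse temperature
`β c^{−α}`. -/
theorem fermat_constant_speed_geodesic_rescaling
    (n : ℕ) (s : EuclideanSpace ℝ (Fin n) → EuclideanSpace ℝ (Fin n))
    (α : ℝ) (hα : 0 < α)
    (hhom : ∀ c : ℝ, 0 < c → ∀ x, s (c • x) = c ^ (α - 1) • s x)
    (β c : ℝ) (hc : 0 < c)
    (I : Set ℝ) (hI : Convex ℝ I)
    (φ : ℝ → EuclideanSpace ℝ (Fin n))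
    (hφ : ∀ t ∈ I, DifferentiableAt ℝ φ t ∧ DifferentiableAt ℝ (deriv φ) t)
    (hgeo : ∀ t ∈ I,
      deriv (deriv φ) t
        - (β * ⟪s (φ t), deriv φ t⟫) • deriv φ t
        + (β * ‖deriv φ t‖ ^ 2) • s (φ t) = 0) :
    ∀ t ∈ I,
      deriv (deriv (fun u => c • φ u)) t
        - ((β * c ^ (-α)) * ⟪s (c • φ t), deriv (fun u => c • φ u) t⟫)
            • deriv (fun u => c • φ u) t
        + ((β * c ^ (-α)) * ‖deriv (fun u => c • φ u) t‖ ^ 2) • s (c • φ t) = 0 := by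
  intro t ht
  have hc' : c ≠ 0 := ne_of_gt hc
  have hd1 : deriv (fun u => c • φ u) = fun u => c • deriv φ u :=
    deriv_const_smul_fun c hc' φ
  have hd2 : deriv (deriv (fun u => c • φ u)) t = c • deriv (deriv φ) t := by
    rw [hd1, deriv_const_smul_fun c hc' (deriv φ)]
  rw [hd2, hd1, hhom c hc]
  have h1 : c ^ (α - 1) * c = c ^ α := by
    rw [Real.rpow_sub hc, Real.rpow_one, div_mul_cancel₀ _ hc']
  have hneg : c ^ (-α) * c ^ α = 1 := by
    rw [← Real.rpow_add hc]; simp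
  have hinner : ⟪(c ^ (α - 1)) • s (φ t), c • deriv φ t⟫
      = (c ^ (α - 1) * c * ⟪s (φ t), deriv φ t⟫ : ℝ) := by
    rw [real_inner_smul_left, real_inner_smul_right]; ring
  have hnorm : ‖c • deriv φ t‖ ^ 2 = c ^ 2 * ‖deriv φ t‖ ^ 2 := by
    rw [norm_smul]; simp [mul_pow, abs_of_pos hc]
  have key := hgeo t ht
  have goal2 : c • (deriv (deriv φ) t
        - (β * ⟪s (φ t), deriv φ t⟫) • deriv φ t
        + (β * ‖deriv φ t‖ ^ 2) • s (φ t)) = 0 := by rw [key, smul_zero]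
  rw [smul_add, smul_sub, smul_smul, smul_smul] at goal2
  rw [hinner, hnorm, smul_smul, smul_smul]
  have A : β * c ^ (-α) * (c ^ (α - 1) * c * ⟪s (φ t), deriv φ t⟫) * c
      = c * (β * ⟪s (φ t), deriv φ t⟫) := by
    calc β * c ^ (-α) * (c ^ (α - 1) * c * ⟪s (φ t), deriv φ t⟫) * c
        = (c ^ (-α) * (c ^ (α - 1) * c)) * (β * ⟪s (φ t), deriv φ t⟫ * c) := by ring
      _ = c * (β * ⟪s (φ t), deriv φ t⟫) := by rw [h1, hneg]; ring
  have B : β * c ^ (-α) * (c ^ 2 * ‖deriv φ t‖ ^ 2) * c ^ (α - 1)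
      = c * (β * ‖deriv φ t‖ ^ 2) := by
    calc β * c ^ (-α) * (c ^ 2 * ‖deriv φ t‖ ^ 2) * c ^ (α - 1)
        = (c ^ (-α) * (c ^ (α - 1) * c)) * c * (β * ‖deriv φ t‖ ^ 2) := by ring
      _ = c * (β * ‖deriv φ t‖ ^ 2) := by rw [h1, hneg]; ring
  rw [A, B]
  exact goal2
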